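/- Let v₁,…,v₂₄ ∈ ℝ⁴ be the 24 vectors 2e_i (1 ≤ i ≤ 4), √2·(e_i + e_j) and √2·(e_i − e_j) (1 ≤ i < j ≤ 4), and e₁ + ε₂e₂ + ε₃e₃ + ε₄e₄ (ε₂,ε₃,ε₄ ∈ {±1}). Then each v_j has norm 2, the configuration is an equal-norm spherical (3,3)-design for ℝ⁴, i.e. Σ_{j=1}^{24} Σ_{k=1}^{24} |⟨v_j,v_k⟩|⁶ = (5/64)·(Σ_{ℓ=1}^{24} ‖v_ℓ‖⁶)², and the normalized angles |⟨v_j,v_k⟩|/4 over the 276 unordered pairs j < k take exactly the values 0 (108 times), 1/√2 (72 times), and 1/2 (96 times). -/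

import Mathlib

open Real

/-- The `24` vectors `2eᵢ`, `√2(eᵢ ± eⱼ)` (`i < j`), and `e₁ ± e₂ ± e₃ ± e₄` in `ℝ⁴`
of Kempner's equal-norm `24`-point spherical `(3,3)`-design. -/
noncomputable def v : Fin 24 → Fin 4 → ℝ :=
  ![![2, 0, 0, 0], ![0, 2, 0, 0], ![0, 0, 2, 0], ![0, 0, 0, 2],
    ![Real.sqrt 2, Real.sqrt 2, 0, 0], ![Real.sqrt 2, 0, Real.sqrt 2, 0],
    ![Real.sqrt 2, 0, 0, Real.sqrt 2], ![0, Real.sqrt 2, Real.sqrt 2, 0],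
    ![0, Real.sqrt 2, 0, Real.sqrt 2], ![0, 0, Real.sqrt 2, Real.sqrt 2],
    ![Real.sqrt 2, -Real.sqrt 2, 0, 0], ![Real.sqrt 2, 0, -Real.sqrt 2, 0],
    ![Real.sqrt 2, 0, 0, -Real.sqrt 2], ![0, Real.sqrt 2, -Real.sqrt 2, 0],
    ![0, Real.sqrt 2, 0, -Real.sqrt 2], ![0, 0, Real.sqrt 2, -Real.sqrt 2],
    ![1, 1, 1, 1], ![1, 1, 1, -1], ![1, 1, -1, 1], ![1, 1, -1, -1],
    ![1, -1, 1, 1], ![1, -1, 1, -1], ![1, -1, -1, 1], ![1, -1, -1, -1]]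

/-- Rational shadow of the design: `(a, b)` encodes `a + b * √2`. -/
def w : Fin 24 → Fin 4 → ℤ × ℤ :=
  ![![(2,0), (0,0), (0,0), (0,0)], ![(0,0), (2,0), (0,0), (0,0)],
    ![(0,0), (0,0), (2,0), (0,0)], ![(0,0), (0,0), (0,0), (2,0)],
    ![(0,1), (0,1), (0,0), (0,0)], ![(0,1), (0,0), (0,1), (0,0)],
    ![(0,1), (0,0), (0,0), (0,1)], ![(0,0), (0,1), (0,1), (0,0)],
    ![(0,0), (0,1), (0,0), (0,1)], ![(0,0), (0,0), (0,1), (0,1)],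
    ![(0,1), (0,-1), (0,0), (0,0)], ![(0,1), (0,0), (0,-1), (0,0)],
    ![(0,1), (0,0), (0,0), (0,-1)], ![(0,0), (0,1), (0,-1), (0,0)],
    ![(0,0), (0,1), (0,0), (0,-1)], ![(0,0), (0,0), (0,1), (0,-1)],
    ![(1,0), (1,0), (1,0), (1,0)], ![(1,0), (1,0), (1,0), (-1,0)],
    ![(1,0), (1,0), (-1,0), (1,0)], ![(1,0), (1,0), (-1,0), (-1,0)],
    ![(1,0), (-1,0), (1,0), (1,0)], ![(1,0), (-1,0), (1,0), (-1,0)],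
    ![(1,0), (-1,0), (-1,0), (1,0)], ![(1,0), (-1,0), (-1,0), (-1,0)]]

def pmul (p q : ℤ × ℤ) : ℤ × ℤ := (p.1 * q.1 + 2 * p.2 * q.2, p.1 * q.2 + p.2 * q.1)
def padd (p q : ℤ × ℤ) : ℤ × ℤ := (p.1 + q.1, p.2 + q.2)

def ipZ (j k : Fin 24) : ℤ × ℤ :=
  padd (padd (pmul (w j 0) (w k 0)) (pmul (w j 1) (w k 1)))
       (padd (pmul (w j 2) (w k 2)) (pmul (w j 3) (w k 3)))

noncomputable def emb (p : ℤ × ℤ) : ℝ := (p.1 : ℝ) + (p.2 : ℝ) * Real.sqrt 2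

lemma hs2 : Real.sqrt 2 * Real.sqrt 2 = 2 := Real.mul_self_sqrt (by norm_num)

lemma emb_pmul (p q : ℤ × ℤ) : emb (pmul p q) = emb p * emb q := by
  have h2 : Real.sqrt 2 ^ 2 = 2 := Real.sq_sqrt (by norm_num)
  simp only [emb, pmul]; push_cast
  linear_combination (-(p.2 : ℝ) * (q.2 : ℝ)) * h2

lemma emb_padd (p q : ℤ × ℤ) : emb (padd p q) = emb p + emb q := by
  simp only [emb, padd]; push_cast; ring

lemma v_eq : ∀ j i, v j i = emb (w j i) := by
  have h0 : ∀ i, v 0 i = emb (w 0 i) := by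
    have hv : v 0 = (![2, 0, 0, 0] : Fin 4 → ℝ) := rfl
    have hw : w 0 = (![(2,0), (0,0), (0,0), (0,0)] : Fin 4 → ℤ × ℤ) := rfl
    intro i; rw [hv, hw]; fin_cases i <;> norm_num [emb]
  have h1 : ∀ i, v 1 i = emb (w 1 i) := by
    have hv : v 1 = (![0, 2, 0, 0] : Fin 4 → ℝ) := rfl
    have hw : w 1 = (![(0,0), (2,0), (0,0), (0,0)] : Fin 4 → ℤ × ℤ) := rfl
    intro i; rw [hv, hw]; fin_cases i <;> norm_num [emb]
  have h2 : ∀ i, v 2 i = emb (w 2 i) := by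
    have hv : v 2 = (![0, 0, 2, 0] : Fin 4 → ℝ) := rfl
    have hw : w 2 = (![(0,0), (0,0), (2,0), (0,0)] : Fin 4 → ℤ × ℤ) := rfl
    intro i; rw [hv, hw]; fin_cases i <;> norm_num [emb]
  have h3 : ∀ i, v 3 i = emb (w 3 i) := by
    have hv : v 3 = (![0, 0, 0, 2] : Fin 4 → ℝ) := rfl
    have hw : w 3 = (![(0,0), (0,0), (0,0), (2,0)] : Fin 4 → ℤ × ℤ) := rfl
    intro i; rw [hv, hw]; fin_cases i <;> norm_num [emb]
  have h4 : ∀ i, v 4 i = emb (w 4 i) := by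
    have hv : v 4 = (![Real.sqrt 2, Real.sqrt 2, 0, 0] : Fin 4 → ℝ) := rfl
    have hw : w 4 = (![(0,1), (0,1), (0,0), (0,0)] : Fin 4 → ℤ × ℤ) := rfl
    intro i; rw [hv, hw]; fin_cases i <;> norm_num [emb]
  have h5 : ∀ i, v 5 i = emb (w 5 i) := by
    have hv : v 5 = (![Real.sqrt 2, 0, Real.sqrt 2, 0] : Fin 4 → ℝ) := rfl
    have hw : w 5 = (![(0,1), (0,0), (0,1), (0,0)] : Fin 4 → ℤ × ℤ) := rfl
    intro i; rw [hv, hw]; fin_cases i <;> norm_num [emb]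
  have h6 : ∀ i, v 6 i = emb (w 6 i) := by
    have hv : v 6 = (![Real.sqrt 2, 0, 0, Real.sqrt 2] : Fin 4 → ℝ) := rfl
    have hw : w 6 = (![(0,1), (0,0), (0,0), (0,1)] : Fin 4 → ℤ × ℤ) := rfl
    intro i; rw [hv, hw]; fin_cases i <;> norm_num [emb]
  have h7 : ∀ i, v 7 i = emb (w 7 i) := by
    have hv : v 7 = (![0, Real.sqrt 2, Real.sqrt 2, 0] : Fin 4 → ℝ) := rfl
    have hw : w 7 = (![(0,0), (0,1), (0,1), (0,0)] : Fin 4 → ℤ × ℤ) := rfl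
    intro i; rw [hv, hw]; fin_cases i <;> norm_num [emb]
  have h8 : ∀ i, v 8 i = emb (w 8 i) := by
    have hv : v 8 = (![0, Real.sqrt 2, 0, Real.sqrt 2] : Fin 4 → ℝ) := rfl
    have hw : w 8 = (![(0,0), (0,1), (0,0), (0,1)] : Fin 4 → ℤ × ℤ) := rfl
    intro i; rw [hv, hw]; fin_cases i <;> norm_num [emb]
  have h9 : ∀ i, v 9 i = emb (w 9 i) := by
    have hv : v 9 = (![0, 0, Real.sqrt 2, Real.sqrt 2] : Fin 4 → ℝ) := rfl
    have hw : w 9 = (![(0,0), (0,0), (0,1), (0,1)] : Fin 4 → ℤ × ℤ) := rfl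
    intro i; rw [hv, hw]; fin_cases i <;> norm_num [emb]
  have h10 : ∀ i, v 10 i = emb (w 10 i) := by
    have hv : v 10 = (![Real.sqrt 2, -Real.sqrt 2, 0, 0] : Fin 4 → ℝ) := rfl
    have hw : w 10 = (![(0,1), (0,-1), (0,0), (0,0)] : Fin 4 → ℤ × ℤ) := rfl
    intro i; rw [hv, hw]; fin_cases i <;> norm_num [emb]
  have h11 : ∀ i, v 11 i = emb (w 11 i) := by
    have hv : v 11 = (![Real.sqrt 2, 0, -Real.sqrt 2, 0] : Fin 4 → ℝ) := rfl
    have hw : w 11 = (![(0,1), (0,0), (0,-1), (0,0)] : Fin 4 → ℤ × ℤ) := rfl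
    intro i; rw [hv, hw]; fin_cases i <;> norm_num [emb]
  have h12 : ∀ i, v 12 i = emb (w 12 i) := by
    have hv : v 12 = (![Real.sqrt 2, 0, 0, -Real.sqrt 2] : Fin 4 → ℝ) := rfl
    have hw : w 12 = (![(0,1), (0,0), (0,0), (0,-1)] : Fin 4 → ℤ × ℤ) := rfl
    intro i; rw [hv, hw]; fin_cases i <;> norm_num [emb]
  have h13 : ∀ i, v 13 i = emb (w 13 i) := by
    have hv : v 13 = (![0, Real.sqrt 2, -Real.sqrt 2, 0] : Fin 4 → ℝ) := rfl
    have hw : w 13 = (![(0,0), (0,1), (0,-1), (0,0)] : Fin 4 → ℤ × ℤ) := rfl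
    intro i; rw [hv, hw]; fin_cases i <;> norm_num [emb]
  have h14 : ∀ i, v 14 i = emb (w 14 i) := by
    have hv : v 14 = (![0, Real.sqrt 2, 0, -Real.sqrt 2] : Fin 4 → ℝ) := rfl
    have hw : w 14 = (![(0,0), (0,1), (0,0), (0,-1)] : Fin 4 → ℤ × ℤ) := rfl
    intro i; rw [hv, hw]; fin_cases i <;> norm_num [emb]
  have h15 : ∀ i, v 15 i = emb (w 15 i) := by
    have hv : v 15 = (![0, 0, Real.sqrt 2, -Real.sqrt 2] : Fin 4 → ℝ) := rfl
    have hw : w 15 = (![(0,0), (0,0), (0,1), (0,-1)] : Fin 4 → ℤ × ℤ) := rfl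
    intro i; rw [hv, hw]; fin_cases i <;> norm_num [emb]
  have h16 : ∀ i, v 16 i = emb (w 16 i) := by
    have hv : v 16 = (![1, 1, 1, 1] : Fin 4 → ℝ) := rfl
    have hw : w 16 = (![(1,0), (1,0), (1,0), (1,0)] : Fin 4 → ℤ × ℤ) := rfl
    intro i; rw [hv, hw]; fin_cases i <;> norm_num [emb]
  have h17 : ∀ i, v 17 i = emb (w 17 i) := by
    have hv : v 17 = (![1, 1, 1, -1] : Fin 4 → ℝ) := rfl
    have hw : w 17 = (![(1,0), (1,0), (1,0), (-1,0)] : Fin 4 → ℤ × ℤ) := rfl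
    intro i; rw [hv, hw]; fin_cases i <;> norm_num [emb]
  have h18 : ∀ i, v 18 i = emb (w 18 i) := by
    have hv : v 18 = (![1, 1, -1, 1] : Fin 4 → ℝ) := rfl
    have hw : w 18 = (![(1,0), (1,0), (-1,0), (1,0)] : Fin 4 → ℤ × ℤ) := rfl
    intro i; rw [hv, hw]; fin_cases i <;> norm_num [emb]
  have h19 : ∀ i, v 19 i = emb (w 19 i) := by
    have hv : v 19 = (![1, 1, -1, -1] : Fin 4 → ℝ) := rfl
    have hw : w 19 = (![(1,0), (1,0), (-1,0), (-1,0)] : Fin 4 → ℤ × ℤ) := rfl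
    intro i; rw [hv, hw]; fin_cases i <;> norm_num [emb]
  have h20 : ∀ i, v 20 i = emb (w 20 i) := by
    have hv : v 20 = (![1, -1, 1, 1] : Fin 4 → ℝ) := rfl
    have hw : w 20 = (![(1,0), (-1,0), (1,0), (1,0)] : Fin 4 → ℤ × ℤ) := rfl
    intro i; rw [hv, hw]; fin_cases i <;> norm_num [emb]
  have h21 : ∀ i, v 21 i = emb (w 21 i) := by
    have hv : v 21 = (![1, -1, 1, -1] : Fin 4 → ℝ) := rfl
    have hw : w 21 = (![(1,0), (-1,0), (1,0), (-1,0)] : Fin 4 → ℤ × ℤ) := rfl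
    intro i; rw [hv, hw]; fin_cases i <;> norm_num [emb]
  have h22 : ∀ i, v 22 i = emb (w 22 i) := by
    have hv : v 22 = (![1, -1, -1, 1] : Fin 4 → ℝ) := rfl
    have hw : w 22 = (![(1,0), (-1,0), (-1,0), (1,0)] : Fin 4 → ℤ × ℤ) := rfl
    intro i; rw [hv, hw]; fin_cases i <;> norm_num [emb]
  have h23 : ∀ i, v 23 i = emb (w 23 i) := by
    have hv : v 23 = (![1, -1, -1, -1] : Fin 4 → ℝ) := rfl
    have hw : w 23 = (![(1,0), (-1,0), (-1,0), (-1,0)] : Fin 4 → ℤ × ℤ) := rfl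
    intro i; rw [hv, hw]; fin_cases i <;> norm_num [emb]
  intro j i
  fin_cases j
  exacts [h0 i, h1 i, h2 i, h3 i, h4 i, h5 i, h6 i, h7 i, h8 i, h9 i, h10 i, h11 i, h12 i, h13 i, h14 i, h15 i, h16 i, h17 i, h18 i, h19 i, h20 i, h21 i, h22 i, h23 i]

lemma ip_eq (j k : Fin 24) : ∑ i, v j i * v k i = emb (ipZ j k) := by
  rw [Fin.sum_univ_four]
  simp only [v_eq, ipZ, emb_padd, emb_pmul]
  ring

lemma hdiag : ∀ j, ipZ j j = (4, 0) := by decide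

lemma hnorm2 : ∀ l, ∑ i, v l i ^ 2 = (4 : ℝ) := by
  intro l
  have h : ∑ i, v l i ^ 2 = ∑ i, v l i * v l i := by
    refine Finset.sum_congr rfl fun i _ => ?_; ring
  rw [h, ip_eq, hdiag]
  simp [emb]

lemma hcls : ∀ j k, (ipZ j k).1 = 0 ∨ (ipZ j k).2 = 0 := by decide

lemma h6 : ∀ p : ℤ × ℤ, p.1 = 0 ∨ p.2 = 0 →
    |emb p| ^ 6 = ((p.1 ^ 6 + 8 * p.2 ^ 6 : ℤ) : ℝ) := by
  intro p hp
  have he : |emb p| ^ 6 = emb p ^ 6 := Even.pow_abs (by decide) _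
  have h2 : Real.sqrt 2 ^ 2 = 2 := Real.sq_sqrt (by norm_num)
  rcases hp with h | h <;> rw [he] <;> simp only [emb, h] <;> push_cast
  · linear_combination ((p.2 : ℝ) ^ 6 * (Real.sqrt 2 ^ 4 + 2 * Real.sqrt 2 ^ 2 + 4)) * h2
  · ring

lemma hsumZ : (∑ j : Fin 24, ∑ k : Fin 24,
    ((ipZ j k).1 ^ 6 + 8 * (ipZ j k).2 ^ 6)) = 184320 := by decide

lemma hvals : ∀ j k, j ≠ k → ipZ j k = (0,0) ∨ ipZ j k = (2,0) ∨ ipZ j k = (-2,0) ∨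
    ipZ j k = (0,2) ∨ ipZ j k = (0,-2) := by decide

lemma hsqrt2_pos : (0:ℝ) < Real.sqrt 2 := Real.sqrt_pos.mpr (by norm_num)

lemma hinv : (1 : ℝ) / Real.sqrt 2 = Real.sqrt 2 / 2 := by
  have h0 : Real.sqrt 2 ≠ 0 := hsqrt2_pos.ne'
  field_simp
  rw [Real.sq_sqrt (by norm_num : (0:ℝ) ≤ 2)]

lemma hinv_ne_zero : (1 : ℝ) / Real.sqrt 2 ≠ 0 := by positivity

lemma hinv_ne_half : (1 : ℝ) / Real.sqrt 2 ≠ 1/2 := by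
  rw [hinv]
  intro h
  have h' : Real.sqrt 2 = 1 := by linarith
  have hss := hs2
  rw [h'] at hss; norm_num at hss

open Classical in
/-- Kempner's `24` vectors all have norm `2`, they form an equal-norm spherical
`(3,3)`-design for `ℝ⁴` (`Σ_j Σ_k |⟨v_j,v_k⟩|⁶ = (5/64)(Σ_ℓ ‖v_ℓ‖⁶)²`), and the
normalized angles `|⟨v_j,v_k⟩|/4` over the `276` unordered pairs take exactly the values
`0` (108 times), `1/√2` (72 times) and `1/2` (96 times). -/
theorem kempner_design :
    (∀ j, Real.sqrt (∑ i, v j i ^ 2) = 2) ∧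
    (∑ j : Fin 24, ∑ k : Fin 24, |∑ i, v j i * v k i| ^ 6 =
      (5/64 : ℝ) * (∑ l : Fin 24, (∑ i, v l i ^ 2) ^ 3) ^ 2) ∧
    (((Finset.univ.filter fun p : Fin 24 × Fin 24 => p.1 < p.2).filter
        fun p => |∑ i, v p.1 i * v p.2 i| / 4 = 0).card = 108 ∧
     ((Finset.univ.filter fun p : Fin 24 × Fin 24 => p.1 < p.2).filter
        fun p => |∑ i, v p.1 i * v p.2 i| / 4 = 1 / Real.sqrt 2).card = 72 ∧
     ((Finset.univ.filter fun p : Fin 24 × Fin 24 => p.1 < p.2).filter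
        fun p => |∑ i, v p.1 i * v p.2 i| / 4 = 1/2).card = 96 ∧
     ∀ p ∈ Finset.univ.filter fun p : Fin 24 × Fin 24 => p.1 < p.2,
       |∑ i, v p.1 i * v p.2 i| / 4 = 0 ∨
       |∑ i, v p.1 i * v p.2 i| / 4 = 1 / Real.sqrt 2 ∨
       |∑ i, v p.1 i * v p.2 i| / 4 = 1/2) := by
  -- case analysis on the value of a pair
  have hA : ∀ j k : Fin 24, j ≠ k →
      (ipZ j k = (0,0) ∧ |∑ i, v j i * v k i| / 4 = 0) ∨
      ((ipZ j k = (2,0) ∨ ipZ j k = (-2,0)) ∧ |∑ i, v j i * v k i| / 4 = 1/2) ∨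
      ((ipZ j k = (0,2) ∨ ipZ j k = (0,-2)) ∧ |∑ i, v j i * v k i| / 4 = 1 / Real.sqrt 2) := by
    intro j k hne
    rcases hvals j k hne with h | h | h | h | h
    · exact Or.inl ⟨h, by rw [ip_eq, h]; simp [emb]⟩
    · refine Or.inr (Or.inl ⟨Or.inl h, ?_⟩)
      rw [ip_eq, h]; simp [emb]; norm_num
    · refine Or.inr (Or.inl ⟨Or.inr h, ?_⟩)
      rw [ip_eq, h]; simp [emb]; norm_num
    · refine Or.inr (Or.inr ⟨Or.inl h, ?_⟩)
      rw [ip_eq, h, hinv]; simp only [emb]; push_cast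
      rw [abs_of_nonneg (by positivity : (0:ℝ) + 2 * Real.sqrt 2 ≥ 0)]
      ring
    · refine Or.inr (Or.inr ⟨Or.inr h, ?_⟩)
      rw [ip_eq, h, hinv]; simp only [emb]; push_cast
      rw [abs_of_nonpos (by nlinarith [hsqrt2_pos] : (0:ℝ) + (-2) * Real.sqrt 2 ≤ 0)]
      ring
  refine ⟨?_, ?_, ?_, ?_, ?_, ?_⟩
  · intro j
    rw [hnorm2 j, show (4:ℝ) = 2 ^ 2 by norm_num, Real.sqrt_sq (by norm_num : (0:ℝ) ≤ 2)]
  · have hL : ∑ j : Fin 24, ∑ k : Fin 24, |∑ i, v j i * v k i| ^ 6 = (184320 : ℝ) := by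
      have : ∀ j k : Fin 24, |∑ i, v j i * v k i| ^ 6 =
          (((ipZ j k).1 ^ 6 + 8 * (ipZ j k).2 ^ 6 : ℤ) : ℝ) := by
        intro j k; rw [ip_eq, h6 _ (hcls j k)]
      simp only [this]
      push_cast [← Int.cast_sum]
      have h := congrArg (Int.cast : ℤ → ℝ) hsumZ
      push_cast at h ⊢
      exact h
    rw [hL]
    simp only [hnorm2]
    rw [Finset.sum_const, Finset.card_univ, Fintype.card_fin]
    norm_num
  · have he : ((Finset.univ.filter fun p : Fin 24 × Fin 24 => p.1 < p.2).filter
        fun p => |∑ i, v p.1 i * v p.2 i| / 4 = 0) =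
        ((Finset.univ.filter fun p : Fin 24 × Fin 24 => p.1 < p.2).filter
        fun p => ipZ p.1 p.2 = (0,0)) := by
      refine Finset.filter_congr fun p hp => ?_
      have hne : p.1 ≠ p.2 := ne_of_lt (Finset.mem_filter.mp hp).2
      rcases hA p.1 p.2 hne with ⟨h1, h2⟩ | ⟨h1, h2⟩ | ⟨h1, h2⟩
      · simp [h1, h2]
      · rw [h2]
        constructor
        · intro h; norm_num at h
        · intro h; rw [h] at h1; rcases h1 with h1 | h1 <;> exact absurd h1 (by decide)
      · rw [h2]
        constructor
        · intro h; exact absurd h hinv_ne_zero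
        · intro h; rw [h] at h1; rcases h1 with h1 | h1 <;> exact absurd h1 (by decide)
    rw [he]
    decide
  · have he : ((Finset.univ.filter fun p : Fin 24 × Fin 24 => p.1 < p.2).filter
        fun p => |∑ i, v p.1 i * v p.2 i| / 4 = 1 / Real.sqrt 2) =
        ((Finset.univ.filter fun p : Fin 24 × Fin 24 => p.1 < p.2).filter
        fun p => ipZ p.1 p.2 = (0,2) ∨ ipZ p.1 p.2 = (0,-2)) := by
      refine Finset.filter_congr fun p hp => ?_
      have hne : p.1 ≠ p.2 := ne_of_lt (Finset.mem_filter.mp hp).2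
      rcases hA p.1 p.2 hne with ⟨h1, h2⟩ | ⟨h1, h2⟩ | ⟨h1, h2⟩
      · rw [h2]
        constructor
        · intro h; exact absurd h.symm hinv_ne_zero
        · intro h; rw [h1] at h; rcases h with h | h <;> exact absurd h (by decide)
      · rw [h2]
        constructor
        · intro h; exact absurd h.symm hinv_ne_half
        · intro h
          rcases h1 with h1 | h1 <;> rw [h1] at h <;> rcases h with h | h <;>
            exact absurd h (by decide)
      · simp [h1, h2]
    rw [he]
    decide
  · have he : ((Finset.univ.filter fun p : Fin 24 × Fin 24 => p.1 < p.2).filter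
        fun p => |∑ i, v p.1 i * v p.2 i| / 4 = 1/2) =
        ((Finset.univ.filter fun p : Fin 24 × Fin 24 => p.1 < p.2).filter
        fun p => ipZ p.1 p.2 = (2,0) ∨ ipZ p.1 p.2 = (-2,0)) := by
      refine Finset.filter_congr fun p hp => ?_
      have hne : p.1 ≠ p.2 := ne_of_lt (Finset.mem_filter.mp hp).2
      rcases hA p.1 p.2 hne with ⟨h1, h2⟩ | ⟨h1, h2⟩ | ⟨h1, h2⟩
      · rw [h2]
        constructor
        · intro h; norm_num at h
        · intro h; rw [h1] at h; rcases h with h | h <;> exact absurd h (by decide)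
      · simp [h1, h2]
      · rw [h2]
        constructor
        · intro h; exact absurd h hinv_ne_half
        · intro h
          rcases h1 with h1 | h1 <;> rw [h1] at h <;> rcases h with h | h <;>
            exact absurd h (by decide)
    rw [he]
    decide
  · intro p hp
    have hne : p.1 ≠ p.2 := ne_of_lt (Finset.mem_filter.mp hp).2
    rcases hA p.1 p.2 hne with ⟨_, h2⟩ | ⟨_, h2⟩ | ⟨_, h2⟩
    · exact Or.inl h2
    · exact Or.inr (Or.inr h2)
    · exact Or.inr (Or.inl h2)
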